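/- Let (X, μ) be a measure space, let r ≥ 2, and let a_0, …, a_{r-1} : X → ℂ be measurable functions. Suppose (f_n)_{n≥0} is a sequence of measurable functions f_n : X → ℂ satisfying, for every n ≥ 0 and μ-almost every x ∈ X, f_{n+r}(x) = a_0(x) f_{n+r-1}(x) + a_1(x) f_{n+r-2}(x) + ⋯ + a_{r-1}(x) f_n(x). Then for every n ≥ r, f_n(x) = Σ_{s=0}^{r-1} ρ(n−s, r; a(x)) · w_s(x) for μ-almost every x ∈ X, where w_s(x) := Σ_{j=s}^{r-1} a_j(x) f_{s+r-1-j}(x) for s = 0, …, r−1. -/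

import Mathlib

open Finset MeasureTheory

/-- The combinatorial coefficient `ρ(m, r; A)`: the sum, over multi-indices
`k = (k₀, …, k_{r-1}) ∈ ℤ₊ʳ` with `1·k₀ + 2·k₁ + ⋯ + r·k_{r-1} = m − r`, of the multinomial
coefficient `(k₀+⋯+k_{r-1})! / (k₀!⋯k_{r-1}!)` times `A₀^{k₀} ⋯ A_{r-1}^{k_{r-1}}`,
with the convention `ρ(m, r; A) = 0` for `m < r` (and in particular `ρ(r, r; A) = 1`). -/
noncomputable def rho {R : Type*} [Ring R] (r : ℕ) (A : ℕ → R) (m : ℕ) : R :=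
  if m < r then 0
  else ∑ k ∈ (Fintype.piFinset fun _ : Fin r => Finset.range (m - r + 1)).filter
      (fun k : Fin r → ℕ => ∑ j : Fin r, ((j : ℕ) + 1) * k j = m - r),
    (Nat.multinomial Finset.univ k : R) * (List.ofFn fun j : Fin r => A (j : ℕ) ^ k j).prod

lemma mult_step {r : ℕ} (k : Fin r → ℕ) (j : Fin r) (h : 0 < k j) :
    k j * Nat.multinomial univ k =
      (∑ i, k i) * Nat.multinomial univ (Function.update k j (k j - 1)) := by
  have h1 : k j * ∏ i, (Function.update k j (k j - 1) i).factorial = ∏ i, (k i).factorial := by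
    have e : ∀ i : Fin r, (Function.update k j (k j - 1) i).factorial =
        Function.update (fun i => (k i).factorial) j ((k j - 1).factorial) i := by
      intro i; exact (Function.apply_update (fun _ n => Nat.factorial n) k j (k j - 1) i)
    simp only [e]
    rw [Finset.prod_update_of_mem (mem_univ j), ← mul_assoc, Nat.mul_factorial_pred h.ne',
      ← Finset.erase_eq]
    exact Finset.mul_prod_erase univ (fun i => (k i).factorial) (mem_univ j)
  have h2 : ∑ i, Function.update k j (k j - 1) i = (∑ i, k i) - 1 := by
    rw [Finset.sum_update_of_mem (mem_univ j)]
    have h3 := Finset.add_sum_erase univ k (mem_univ j)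
    rw [Finset.erase_eq] at h3
    omega
  have hs : 0 < ∑ i, k i := by
    have := Finset.add_sum_erase univ k (mem_univ j); omega
  have spec1 := Nat.multinomial_spec univ k
  have spec2 := Nat.multinomial_spec univ (Function.update k j (k j - 1))
  rw [h2] at spec2
  apply Nat.eq_of_mul_eq_mul_right (Finset.prod_pos (fun i _ => Nat.factorial_pos _) :
    0 < ∏ i, (Function.update k j (k j - 1) i).factorial)
  calc k j * Nat.multinomial univ k * ∏ i, (Function.update k j (k j - 1) i).factorial
      = (k j * ∏ i, (Function.update k j (k j - 1) i).factorial) * Nat.multinomial univ k := by ring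
    _ = (∏ i, (k i).factorial) * Nat.multinomial univ k := by rw [h1]
    _ = Nat.factorial (∑ i, k i) := spec1
    _ = (∑ i, k i) * Nat.factorial ((∑ i, k i) - 1) := (Nat.mul_factorial_pred hs.ne').symm
    _ = (∑ i, k i) * ((∏ i, (Function.update k j (k j - 1) i).factorial) *
          Nat.multinomial univ (Function.update k j (k j - 1))) := by rw [spec2]
    _ = _ := by ring

lemma mult_pascal {r : ℕ} (k : Fin r → ℕ) (h : 0 < ∑ i, k i) :
    Nat.multinomial univ k =
      ∑ j : Fin r, if k j = 0 then 0 else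
        Nat.multinomial univ (Function.update k j (k j - 1)) := by
  apply Nat.eq_of_mul_eq_mul_left h
  rw [Finset.mul_sum]
  have : ∀ j : Fin r, (∑ i, k i) * (if k j = 0 then 0 else
      Nat.multinomial univ (Function.update k j (k j - 1))) = k j * Nat.multinomial univ k := by
    intro j
    by_cases hj : k j = 0
    · simp [hj]
    · rw [if_neg hj, ← mult_step k j (Nat.pos_of_ne_zero hj)]
  rw [Finset.sum_congr rfl (fun j _ => this j), ← Finset.sum_mul]

lemma mem_T {r N : ℕ} (k : Fin r → ℕ) :
    k ∈ (Fintype.piFinset fun _ : Fin r => Finset.range (N + 1)).filter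
      (fun k : Fin r → ℕ => ∑ j : Fin r, ((j : ℕ) + 1) * k j = N) ↔
    ∑ j : Fin r, ((j : ℕ) + 1) * k j = N := by
  simp only [Finset.mem_filter, Fintype.mem_piFinset, Finset.mem_range]
  constructor
  · exact fun h => h.2
  · intro h
    refine ⟨fun i => ?_, h⟩
    have h1 : ((i : ℕ) + 1) * k i ≤ N :=
      h ▸ Finset.single_le_sum (f := fun j : Fin r => ((j : ℕ) + 1) * k j)
        (fun j _ => Nat.zero_le _) (mem_univ i)
    have h2 : k i ≤ ((i : ℕ) + 1) * k i := Nat.le_mul_of_pos_left _ (by omega)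
    omega

lemma rho_not_lt {r m : ℕ} (A : ℕ → ℂ) (h : ¬ m < r) :
    rho r A m = ∑ k ∈ (Fintype.piFinset fun _ : Fin r => Finset.range (m - r + 1)).filter
      (fun k : Fin r → ℕ => ∑ j : Fin r, ((j : ℕ) + 1) * k j = m - r),
      (Nat.multinomial Finset.univ k : ℂ) * ∏ i : Fin r, A (i : ℕ) ^ k i := by
  rw [rho, if_neg h]
  exact Finset.sum_congr rfl fun k _ => by rw [List.prod_ofFn]

lemma rho_rec {r m : ℕ} (hr : 0 < r) (hm : r < m) (A : ℕ → ℂ) :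
    rho r A m = ∑ j ∈ Finset.range r, A j * rho r A (m - 1 - j) := by
  have hN : 0 < m - r := by omega
  rw [rho_not_lt A (by omega), ← Fin.sum_univ_eq_sum_range (fun j => A j * rho r A (m - 1 - j))]
  set N := m - r with hNdef
  set T : ℕ → Finset (Fin r → ℕ) := fun M =>
    (Fintype.piFinset fun _ : Fin r => Finset.range (M + 1)).filter
      (fun k : Fin r → ℕ => ∑ j : Fin r, ((j : ℕ) + 1) * k j = M) with hT
  have memT : ∀ (M : ℕ) (k : Fin r → ℕ), k ∈ T M ↔ ∑ j : Fin r, ((j : ℕ) + 1) * k j = M :=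
    fun M k => mem_T k
  calc ∑ k ∈ T N, (Nat.multinomial Finset.univ k : ℂ) * ∏ i : Fin r, A (i : ℕ) ^ k i
      = ∑ k ∈ T N, ∑ j : Fin r, (if k j = 0 then 0 else
          (Nat.multinomial Finset.univ (Function.update k j (k j - 1)) : ℂ))
          * ∏ i : Fin r, A (i : ℕ) ^ k i := by
        refine Finset.sum_congr rfl fun k hk => ?_
        have hpos : 0 < ∑ i, k i := by
          by_contra hc
          have hz : ∀ i, k i = 0 := by
            intro i
            have := Finset.sum_eq_zero_iff.mp (by omega : ∑ i, k i = 0)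
            exact this i (mem_univ i)
          have := (memT N k).mp hk
          simp [hz] at this
          omega
        rw [mult_pascal k hpos]
        push_cast
        rw [Finset.sum_mul]
    _ = ∑ j : Fin r, ∑ k ∈ T N, (if k j = 0 then 0 else
          (Nat.multinomial Finset.univ (Function.update k j (k j - 1)) : ℂ))
          * ∏ i : Fin r, A (i : ℕ) ^ k i := by
        rw [Finset.sum_comm]
    _ = ∑ j : Fin r, ∑ k ∈ (T N).filter (fun k => ¬ k j = 0),
          (Nat.multinomial Finset.univ (Function.update k j (k j - 1)) : ℂ)
          * ∏ i : Fin r, A (i : ℕ) ^ k i := by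
        refine Finset.sum_congr rfl fun j _ => ?_
        conv_rhs => rw [Finset.sum_filter]
        refine Finset.sum_congr rfl fun k _ => ?_
        split <;> simp_all
    _ = ∑ j : Fin r, A (j : ℕ) * rho r A (m - 1 - (j : ℕ)) := by
        refine Finset.sum_congr rfl fun j _ => ?_
        by_cases hj : (j : ℕ) + 1 ≤ N
        · have hlt : ¬ (m - 1 - (j : ℕ) < r) := by omega
          have hsub : m - 1 - (j : ℕ) - r = N - ((j : ℕ) + 1) := by omega
          rw [rho_not_lt A hlt, hsub, Finset.mul_sum]
          refine Finset.sum_nbij' (i := fun k => Function.update k j (k j - 1))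
            (j := fun k => Function.update k j (k j + 1)) ?_ ?_ ?_ ?_ ?_
          · intro k hk
            rw [Finset.mem_filter] at hk
            obtain ⟨hk1, hk2⟩ := hk
            have hkN := (memT N k).mp hk1
            have hkj : 0 < k j := Nat.pos_of_ne_zero hk2
            rw [memT]
            have e : ∀ i : Fin r, ((i : ℕ) + 1) * Function.update k j (k j - 1) i =
                Function.update (fun i : Fin r => ((i : ℕ) + 1) * k i) j
                  (((j : ℕ) + 1) * (k j - 1)) i :=
              fun i => Function.apply_update (fun (i : Fin r) n => ((i : ℕ) + 1) * n) k j _ i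
            rw [Finset.sum_congr rfl fun i _ => e i, Finset.sum_update_of_mem (mem_univ j)]
            have h3 : ((j : ℕ) + 1) * k j + ∑ x ∈ univ \ {j}, ((x : ℕ) + 1) * k x
                = ∑ x : Fin r, ((x : ℕ) + 1) * k x := by
              rw [← Finset.erase_eq]
              exact Finset.add_sum_erase univ (fun i : Fin r => ((i : ℕ) + 1) * k i) (mem_univ j)
            have e1 : ((j : ℕ) + 1) * (k j - 1) + ((j : ℕ) + 1) = ((j : ℕ) + 1) * k j := by
              rw [← Nat.mul_succ]
              congr 1
              omega
            omega
          · intro k hk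
            have hkM := (memT _ k).mp hk
            rw [Finset.mem_filter]
            constructor
            · rw [memT]
              have e : ∀ i : Fin r, ((i : ℕ) + 1) * Function.update k j (k j + 1) i =
                  Function.update (fun i : Fin r => ((i : ℕ) + 1) * k i) j
                    (((j : ℕ) + 1) * (k j + 1)) i :=
                fun i => Function.apply_update (fun (i : Fin r) n => ((i : ℕ) + 1) * n) k j _ i
              rw [Finset.sum_congr rfl fun i _ => e i, Finset.sum_update_of_mem (mem_univ j)]
              have h3 : ((j : ℕ) + 1) * k j + ∑ x ∈ univ \ {j}, ((x : ℕ) + 1) * k x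
                  = ∑ x : Fin r, ((x : ℕ) + 1) * k x := by
                rw [← Finset.erase_eq]
                exact Finset.add_sum_erase univ (fun i : Fin r => ((i : ℕ) + 1) * k i) (mem_univ j)
              have e1 : ((j : ℕ) + 1) * (k j + 1) = ((j : ℕ) + 1) * k j + ((j : ℕ) + 1) :=
                Nat.mul_succ _ _
              omega
            · simp [Function.update_self]
          · intro k hk
            rw [Finset.mem_filter] at hk
            have hkj : 0 < k j := Nat.pos_of_ne_zero hk.2
            funext i
            by_cases hi : i = j
            · subst hi; simp [Function.update_self]; omega
            · simp [Function.update_of_ne hi]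
          · intro k hk
            funext i
            by_cases hi : i = j
            · subst hi; simp [Function.update_self]
            · simp [Function.update_of_ne hi]
          · intro k hk
            rw [Finset.mem_filter] at hk
            have hkj : 0 < k j := Nat.pos_of_ne_zero hk.2
            have e : ∀ i : Fin r, A (i : ℕ) ^ Function.update k j (k j - 1) i =
                Function.update (fun i : Fin r => A (i : ℕ) ^ k i) j
                  (A (j : ℕ) ^ (k j - 1)) i :=
              fun i => Function.apply_update (fun (i : Fin r) n => A (i : ℕ) ^ n) k j _ i
            have hP : ∏ i : Fin r, A (i : ℕ) ^ k i =
                A (j : ℕ) * ∏ i : Fin r, A (i : ℕ) ^ (Function.update k j (k j - 1) i) := by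
              rw [Finset.prod_congr rfl fun i _ => e i,
                Finset.prod_update_of_mem (mem_univ j), ← Finset.erase_eq,
                ← Finset.mul_prod_erase univ (fun i : Fin r => A (i : ℕ) ^ k i) (mem_univ j)]
              have hpow : A (j : ℕ) ^ k j = A (j : ℕ) * A (j : ℕ) ^ (k j - 1) := by
                conv_lhs => rw [← Nat.sub_add_cancel hkj]
                rw [pow_succ]
                ring
              rw [hpow]
              ring
            rw [hP]
            ring
        · have hempty : (T N).filter (fun k => ¬ k j = 0) = ∅ := by
            refine Finset.eq_empty_of_forall_notMem fun k hk => ?_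
            rw [Finset.mem_filter] at hk
            have hkN := (memT N k).mp hk.1
            have hkj : 0 < k j := Nat.pos_of_ne_zero hk.2
            have h1 : ((j : ℕ) + 1) * k j ≤ N :=
              hkN ▸ Finset.single_le_sum (f := fun i : Fin r => ((i : ℕ) + 1) * k i)
                (fun i _ => Nat.zero_le _) (mem_univ j)
            have h2 : (j : ℕ) + 1 ≤ ((j : ℕ) + 1) * k j := Nat.le_mul_of_pos_right _ hkj
            omega
          have hlt : m - 1 - (j : ℕ) < r := by omega
          rw [hempty, rho, if_pos hlt]
          simp

lemma rho_lt {R : Type*} [Ring R] {r m : ℕ} (A : ℕ → R) (h : m < r) : rho r A m = 0 := by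
  rw [rho, if_pos h]

lemma rho_self {r : ℕ} (A : ℕ → ℂ) : rho r A r = 1 := by
  rw [rho_not_lt A (lt_irrefl r)]
  have hset : (Fintype.piFinset fun _ : Fin r => Finset.range (r - r + 1)).filter
      (fun k : Fin r → ℕ => ∑ j : Fin r, ((j : ℕ) + 1) * k j = r - r) =
      {fun _ => 0} := by
    ext k
    rw [mem_T, Finset.mem_singleton, Nat.sub_self]
    constructor
    · intro h
      funext i
      have h1 := Finset.sum_eq_zero_iff.mp h i (mem_univ i)
      rcases Nat.mul_eq_zero.mp h1 with h2 | h2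
      · omega
      · exact h2
    · rintro rfl; simp
  rw [hset, Finset.sum_singleton]
  simp [Nat.multinomial]

lemma rho_split {r : ℕ} (hr : 0 < r) (A : ℕ → ℂ) (n s : ℕ) (hs : s < r) :
    rho r A (n + r - s) = (if s = n then 1 else 0) +
      ∑ j ∈ Finset.range r, A j * rho r A (n + r - s - 1 - j) := by
  rcases lt_trichotomy s n with h | h | h
  · rw [if_neg (by omega), zero_add]
    exact rho_rec hr (by omega) A
  · subst h
    rw [if_pos rfl, show s + r - s = r from by omega, rho_self A]
    rw [Finset.sum_eq_zero fun j hj => ?_, add_zero]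
    rw [rho_lt A (by simp at hj; omega), mul_zero]
  · rw [rho_lt A (by omega), if_neg (by omega), zero_add]
    symm
    refine Finset.sum_eq_zero fun j hj => ?_
    rw [rho_lt A (by omega), mul_zero]

lemma pointwise {r : ℕ} (hr : 2 ≤ r) (A F : ℕ → ℂ)
    (hrec : ∀ n, F (n + r) = ∑ j ∈ Finset.range r, A j * F (n + (r - 1 - j))) :
    ∀ n, F (n + r) = ∑ s ∈ Finset.range r, rho r A (n + r - s) *
      (∑ j ∈ Finset.Icc s (r - 1), A j * F (s + (r - 1 - j))) := by
  intro n
  induction n using Nat.strong_induction_on with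
  | _ n ih =>
  have hr0 : 0 < r := by omega
  set w : ℕ → ℂ := fun s => ∑ j ∈ Finset.Icc s (r - 1), A j * F (s + (r - 1 - j)) with hw
  rw [hrec n]
  symm
  calc ∑ s ∈ Finset.range r, rho r A (n + r - s) * w s
      = ∑ s ∈ Finset.range r, ((if s = n then 1 else 0) +
          ∑ j ∈ Finset.range r, A j * rho r A (n + r - s - 1 - j)) * w s :=
        Finset.sum_congr rfl fun s hs => by
          rw [rho_split hr0 A n s (Finset.mem_range.mp hs)]
    _ = (∑ s ∈ Finset.range r, (if s = n then 1 else 0) * w s)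
        + ∑ s ∈ Finset.range r, ∑ j ∈ Finset.range r,
            (A j * rho r A (n + r - s - 1 - j)) * w s := by
        rw [← Finset.sum_add_distrib]
        refine Finset.sum_congr rfl fun s _ => ?_
        rw [add_mul, Finset.sum_mul]
    _ = (if n < r then w n else 0)
        + ∑ j ∈ Finset.range r, A j * ∑ s ∈ Finset.range r,
            rho r A (n + r - s - 1 - j) * w s := by
        congr 1
        · simp only [ite_mul, one_mul, zero_mul]
          rw [Finset.sum_ite_eq' (Finset.range r) n w]
          simp [Finset.mem_range]
        · rw [Finset.sum_comm]
          refine Finset.sum_congr rfl fun j _ => ?_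
          rw [Finset.mul_sum]
          exact Finset.sum_congr rfl fun s _ => by ring
    _ = (if n < r then w n else 0)
        + ∑ j ∈ Finset.range r, (if j < n then A j * F (n + (r - 1 - j)) else 0) := by
        congr 1
        refine Finset.sum_congr rfl fun j hj => ?_
        have hjr : j < r := Finset.mem_range.mp hj
        by_cases hjn : j < n
        · rw [if_pos hjn]
          have hS : ∑ s ∈ Finset.range r, rho r A (n + r - s - 1 - j) * w s
              = F ((n - 1 - j) + r) := by
            have e : ∀ s ∈ Finset.range r, rho r A (n + r - s - 1 - j) * w s
                = rho r A ((n - 1 - j) + r - s) * w s := fun s hs => by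
              rw [show n + r - s - 1 - j = (n - 1 - j) + r - s from by omega]
            rw [Finset.sum_congr rfl e]
            simp only [hw]
            exact (ih (n - 1 - j) (by omega)).symm
          rw [hS, show (n - 1 - j) + r = n + (r - 1 - j) from by omega]
        · rw [if_neg hjn]
          rw [Finset.sum_eq_zero fun s hs => ?_, mul_zero]
          have hsr := Finset.mem_range.mp hs
          rw [rho_lt A (by omega), zero_mul]
    _ = ∑ j ∈ Finset.range r, A j * F (n + (r - 1 - j)) := by
        have hfil : ∑ j ∈ Finset.range r, (if j < n then A j * F (n + (r - 1 - j)) else 0)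
            = ∑ j ∈ Finset.range (min n r), A j * F (n + (r - 1 - j)) := by
          rw [← Finset.sum_filter]
          refine Finset.sum_congr ?_ fun j _ => rfl
          ext j
          simp only [Finset.mem_filter, Finset.mem_range, Finset.mem_range]
          omega
        rw [hfil]
        by_cases hn : n < r
        · rw [if_pos hn, min_eq_left (by omega)]
          have hIcc : Finset.Icc n (r - 1) = Finset.Ico n r := by
            rw [← Finset.Ico_add_one_right_eq_Icc]
            congr 1
            omega
          rw [hw]
          simp only [hIcc]
          rw [Finset.range_eq_Ico, Finset.range_eq_Ico, ← Finset.sum_Ico_consecutive _ (Nat.zero_le n) (le_of_lt hn),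
            ← Finset.range_eq_Ico]
          ring
        · rw [if_neg hn, min_eq_right (by omega), zero_add]

/-- Combinatorial formula for the solutions of a pointwise (μ-a.e.) linear recurrence of order
`r` for measurable complex-valued functions, with measurable coefficient functions. -/
theorem ae_recurrence_combinatorial_formula
    {X : Type*} [MeasurableSpace X] (μ : Measure X) {r : ℕ} (hr : 2 ≤ r)
    (a : ℕ → X → ℂ) (ha : ∀ j < r, Measurable (a j))
    (f : ℕ → X → ℂ) (hf : ∀ n, Measurable (f n))
    (hrec : ∀ n : ℕ, ∀ᵐ x ∂μ,
      f (n + r) x = ∑ j ∈ Finset.range r, a j x * f (n + (r - 1 - j)) x) :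
    ∀ n : ℕ, r ≤ n → ∀ᵐ x ∂μ,
      f n x = ∑ s ∈ Finset.range r, rho r (fun j => a j x) (n - s) *
        (∑ j ∈ Finset.Icc s (r - 1), a j x * f (s + (r - 1 - j)) x) := by
  intro n hn
  have H : ∀ᵐ x ∂μ, ∀ m : ℕ,
      f (m + r) x = ∑ j ∈ Finset.range r, a j x * f (m + (r - 1 - j)) x :=
    MeasureTheory.ae_all_iff.mpr hrec
  filter_upwards [H] with x hx
  have key := pointwise hr (fun j => a j x) (fun m => f m x) hx (n - r)
  rw [show n - r + r = n from by omega] at key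
  exact key
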